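/- arXiv:2006.13701 — 3 statements merged into one kernel-verified Lean document; each statement's English description precedes it below -/
import Mathlib

section
/- Let K be an n×n real symmetric positive definite matrix, let 1 ≤ k ≤ n, and let u, w ∈ ℝⁿ. Then ∑_{C ⊆ {1,…,n}, |C| = k} (det(K_{CC})/e_k(K)) · uᵀ C K_{CC}^{-1} Cᵀ w = (e_k(K) − e_k(K − w uᵀ)) / e_k(K), where w uᵀ denotes the rank-one n×n matrix with entries w_i u_j. -/
open Matrix BigOperators Finset

/-- The `n × |C|` sampling matrix obtained by selecting the columns of the identity
matrix indexed by `C`. -/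
def sampMatrix {n : ℕ} (C : Finset (Fin n)) : Matrix (Fin n) {x // x ∈ C} ℝ :=
  fun i j => if i = (j : Fin n) then 1 else 0

/-- The principal submatrix `A_{CC}` of `A` with rows and columns indexed by `C`. -/
def principalSub {n : ℕ} (A : Matrix (Fin n) (Fin n) ℝ) (C : Finset (Fin n)) :
    Matrix {x // x ∈ C} {x // x ∈ C} ℝ :=
  fun i j => A i j

/-- `e_k(A)`: the sum of all `k × k` principal minors of `A` (with `e_0(A) = 1`). -/
noncomputable def esymmMinors {n : ℕ} (A : Matrix (Fin n) (Fin n) ℝ) (k : ℕ) : ℝ :=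
  ∑ C ∈ Finset.univ.powersetCard k, (principalSub A C).det

lemma samp_conj {n : ℕ} (K : Matrix (Fin n) (Fin n) ℝ) (C : Finset (Fin n)) :
    (sampMatrix C)ᵀ * K * sampMatrix C = principalSub K C := by
  ext a b
  simp [Matrix.mul_apply, sampMatrix, principalSub, ite_mul, mul_ite]

lemma samp_mulVec {n : ℕ} (C : Finset (Fin n)) (x : {y // y ∈ C} → ℝ) (j : {y // y ∈ C}) :
    (sampMatrix C *ᵥ x) (j : Fin n) = x j := by
  simp [mulVec, sampMatrix, dotProduct, Subtype.coe_inj]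

lemma principalSub_posDef {n : ℕ} {K : Matrix (Fin n) (Fin n) ℝ} (hPD : K.PosDef)
    (C : Finset (Fin n)) : (principalSub K C).PosDef := by
  rw [posDef_iff_dotProduct_mulVec]
  constructor
  · have : principalSub K C = K.submatrix Subtype.val Subtype.val := rfl
    rw [this]
    exact hPD.isHermitian.submatrix _
  · intro x hx
    set y : Fin n → ℝ := sampMatrix C *ᵥ x with hy
    have hyne : y ≠ 0 := by
      obtain ⟨j, hj⟩ := Function.ne_iff.mp hx
      intro h0
      apply hj
      have := congrFun h0 (j : Fin n)
      rwa [hy, samp_mulVec] at this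
    have key : star x ⬝ᵥ (principalSub K C) *ᵥ x = star y ⬝ᵥ K *ᵥ y := by
      rw [← samp_conj K C, ← Matrix.mulVec_mulVec, ← Matrix.mulVec_mulVec,
        star_trivial, star_trivial, dotProduct_mulVec, vecMul_transpose, hy]
    rw [key]
    exact (posDef_iff_dotProduct_mulVec.mp hPD).2 hyne

lemma det_lemma {m : Type*} [Fintype m] [DecidableEq m] {A : Matrix m m ℝ}
    (hA : IsUnit A.det) (wv uv : m → ℝ) :
    (A - vecMulVec wv uv).det = A.det * (1 - uv ⬝ᵥ A⁻¹ *ᵥ wv) := by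
  have h2 : vecMulVec (-wv) uv = -vecMulVec wv uv := by
    ext i j; simp [vecMulVec]
  have h1 : A - vecMulVec wv uv = A + replicateCol Unit (-wv) * replicateRow Unit uv := by
    rw [← vecMulVec_eq Unit, h2, sub_eq_add_neg]
  rw [h1, det_add_replicateCol_mul_replicateRow hA]
  congr 1
  rw [det_unique]
  simp [Matrix.mul_apply, dotProduct, mulVec, Finset.mul_sum, Finset.sum_mul, mul_comm]
  rw [Finset.sum_comm, sub_eq_add_neg]
  congr 2
  exact Finset.sum_congr rfl fun a _ => Finset.sum_congr rfl fun b _ => by ring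

lemma bilinear_samp {n : ℕ} (C : Finset (Fin n)) (B : Matrix {x // x ∈ C} {x // x ∈ C} ℝ)
    (u w : Fin n → ℝ) :
    u ⬝ᵥ (sampMatrix C * B * (sampMatrix C)ᵀ) *ᵥ w =
      (fun j : {x // x ∈ C} => u j) ⬝ᵥ B *ᵥ (fun j : {x // x ∈ C} => w j) := by
  have h1 : (sampMatrix C)ᵀ *ᵥ w = fun j : {x // x ∈ C} => w j := by
    funext j; simp [mulVec, sampMatrix, dotProduct]
  have h2 : u ᵥ* sampMatrix C = fun j : {x // x ∈ C} => u j := by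
    funext j; simp [vecMul, sampMatrix, dotProduct]
  rw [← Matrix.mulVec_mulVec, ← Matrix.mulVec_mulVec, dotProduct_mulVec, h1, h2]

/-- Expectation over `C ~ kDPP(K)` of the bilinear form `uᵀ C K_{CC}⁻¹ Cᵀ w` equals
`(e_k(K) − e_k(K − w uᵀ)) / e_k(K)`. -/
theorem kdpp_expectation_bilinear (n : ℕ) (K : Matrix (Fin n) (Fin n) ℝ)
    (hsymm : K.IsSymm) (hPD : K.PosDef) (k : ℕ) (hk1 : 1 ≤ k) (hkn : k ≤ n)
    (u w : Fin n → ℝ) :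
    ∑ C ∈ Finset.univ.powersetCard k,
        ((principalSub K C).det / esymmMinors K k) *
          (u ⬝ᵥ (sampMatrix C * (principalSub K C)⁻¹ * (sampMatrix C)ᵀ).mulVec w) =
      (esymmMinors K k - esymmMinors (K - vecMulVec w u) k) / esymmMinors K k := by
  have hterm : ∀ C ∈ Finset.univ.powersetCard k,
      ((principalSub K C).det / esymmMinors K k) *
          (u ⬝ᵥ (sampMatrix C * (principalSub K C)⁻¹ * (sampMatrix C)ᵀ).mulVec w) =
        ((principalSub K C).det - (principalSub (K - vecMulVec w u) C).det) /
          esymmMinors K k := by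
    intro C _
    have hApd := principalSub_posDef hPD C
    have hdet : IsUnit (principalSub K C).det := hApd.det_pos.ne'.isUnit
    have hsub : principalSub (K - vecMulVec w u) C =
        principalSub K C - vecMulVec (fun j : {x // x ∈ C} => w j)
          (fun j : {x // x ∈ C} => u j) := by
      ext a b; simp [principalSub, vecMulVec]
    rw [bilinear_samp, hsub, det_lemma hdet]
    field_simp
    ring
  rw [Finset.sum_congr rfl hterm, ← Finset.sum_div, Finset.sum_sub_distrib]
  rfl
end

section
/- Let K be an n×n real matrix, 1 ≤ k ≤ n, and u, w ∈ ℝⁿ. Then e_k(K) − e_k(K − w uᵀ) = ((−1)^{k+1}/(n−k)!) · (d/dt)^{n−k} [uᵀ adj(tI − K) w] evaluated at t = 0, where the entries of adj(tI − K) are polynomials in t and the derivative is the (n−k)-th polynomial derivative. -/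
open Matrix BigOperators Finset Polynomial

variable {R : Type*} [CommRing R]

lemma det_ite_aux {n : ℕ} (A B : Matrix (Fin n) (Fin n) R) (s : Finset (Fin n)) :
    ∀ (Cm : Matrix (Fin n) (Fin n) R),
      (Matrix.of fun i j => if j ∈ s then A i j + B i j else Cm i j).det
      = ∑ t ∈ s.powerset,
          (Matrix.of fun i j =>
            if j ∈ s then (if j ∈ t then B i j else A i j) else Cm i j).det := by
  classical
  induction s using Finset.induction_on with
  | empty => intro Cm; simp
  | @insert a s ha ih =>
    intro Cm
    have hM : (Matrix.of fun i j => if j ∈ insert a s then A i j + B i j else Cm i j)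
        = Matrix.updateCol
            (Matrix.of fun i j => if j ∈ s then A i j + B i j else Cm i j) a
            (fun i => A i a + B i a) := by
      ext i j
      rcases eq_or_ne j a with hj | hj
      · subst hj; simp [Matrix.updateCol_apply, ha]
      · simp [Matrix.updateCol_apply, hj, Finset.mem_insert]
    rw [hM, show (fun i => A i a + B i a) = ((fun i => A i a) + fun i => B i a) from rfl,
      Matrix.det_updateCol_add]
    have key : ∀ (X : Matrix (Fin n) (Fin n) R),
        Matrix.updateCol
            (Matrix.of fun i j => if j ∈ s then A i j + B i j else Cm i j) a
            (fun i => X i a)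
        = Matrix.of fun i j => if j ∈ s then A i j + B i j
            else (Matrix.updateCol Cm a (fun i => X i a)) i j := by
      intro X
      ext i j
      rcases eq_or_ne j a with hj | hj
      · subst hj; simp [Matrix.updateCol_apply, ha]
      · simp [Matrix.updateCol_apply, hj]
    rw [key A, key B, ih, ih, Finset.sum_powerset_insert ha]
    congr 1
    · apply Finset.sum_congr rfl
      intro t ht
      rw [Finset.mem_powerset] at ht
      have hat : a ∉ t := fun h => ha (ht h)
      congr 1
      ext i j
      rcases eq_or_ne j a with hj | hj
      · subst hj; simp [Matrix.updateCol_apply, ha, hat]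
      · simp [Matrix.updateCol_apply, hj, Finset.mem_insert]
    · apply Finset.sum_congr rfl
      intro t ht
      rw [Finset.mem_powerset] at ht
      congr 1
      ext i j
      rcases eq_or_ne j a with hj | hj
      · subst hj; simp [Matrix.updateCol_apply, ha]
      · have hjt : j ∈ insert a t ↔ j ∈ t := by simp [Finset.mem_insert, hj]
        simp [Matrix.updateCol_apply, hj, Finset.mem_insert, hjt]

lemma det_add_expansion {n : ℕ} (A B : Matrix (Fin n) (Fin n) R) :
    (A + B).det = ∑ t ∈ (Finset.univ : Finset (Fin n)).powerset,
      (Matrix.of fun i j => if j ∈ t then B i j else A i j).det := by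
  classical
  have := det_ite_aux A B Finset.univ 0
  simp at this; exact this

lemma det_ite_diagonal {n : ℕ} (B : Matrix (Fin n) (Fin n) R) (d : R) (t : Finset (Fin n)) :
    (Matrix.of fun i j => if j ∈ t then B i j else (Matrix.diagonal fun _ => d) i j).det
      = d ^ (n - t.card) *
        (B.submatrix (Subtype.val : {x // x ∈ t} → Fin n) Subtype.val).det := by
  classical
  set M := Matrix.of fun i j => if j ∈ t then B i j else (Matrix.diagonal fun _ => d) i j with hMdef
  have e := Equiv.sumCompl (· ∈ t)
  rw [← Matrix.det_submatrix_equiv_self (Equiv.sumCompl (fun x => x ∈ t)) M]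
  have hblock : M.submatrix (Equiv.sumCompl (fun x => x ∈ t))
      (Equiv.sumCompl (fun x => x ∈ t)) =
      Matrix.fromBlocks (B.submatrix Subtype.val Subtype.val) 0
        (Matrix.of fun (i : {x // ¬ x ∈ t}) (j : {x // x ∈ t}) => B (i : Fin n) (j : Fin n))
        (Matrix.diagonal fun _ : {x // ¬ x ∈ t} => d) := by
    ext i j
    cases i with
    | inl i => cases j with
      | inl j => simp [hMdef, j.2]
      | inr j =>
        have : (i : Fin n) ≠ (j : Fin n) := fun h => j.2 (h ▸ i.2)
        simp [hMdef, j.2, Matrix.diagonal_apply_ne _ this]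
    | inr i => cases j with
      | inl j => simp [hMdef, j.2]
      | inr j =>
        by_cases hij : (i : Fin n) = (j : Fin n)
        · have : i = j := Subtype.ext hij
          subst this
          simp [hMdef, i.2]
        · have hij' : i ≠ j := fun h => hij (congrArg Subtype.val h)
          simp [hMdef, j.2, Matrix.diagonal_apply_ne _ hij, Matrix.diagonal_apply_ne _ hij']
  rw [hblock, Matrix.det_fromBlocks_zero₁₂, Matrix.det_diagonal]
  rw [Finset.prod_const]
  have hcard : Fintype.card {x // ¬ x ∈ t} = n - t.card := by
    simp [Fintype.card_subtype_compl, Fintype.card_coe]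
  rw [Finset.card_univ, hcard, mul_comm]

lemma charpoly_coeff_esymm {n k : ℕ} (K : Matrix (Fin n) (Fin n) ℝ) (hkn : k ≤ n) :
    (Matrix.charpoly K).coeff (n - k)
      = (-1 : ℝ) ^ k * ∑ C ∈ Finset.univ.powersetCard k,
          (K.submatrix (Subtype.val : {x // x ∈ C} → Fin n) Subtype.val).det := by
  classical
  have hsplit : Matrix.charmatrix K
      = (Matrix.diagonal fun _ : Fin n => (X : ℝ[X])) + -(K.map Polynomial.C) := by
    ext i j
    simp [Matrix.charmatrix_apply, sub_eq_add_neg]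
  have hexp := det_add_expansion (Matrix.diagonal fun _ : Fin n => (X : ℝ[X]))
    (-(K.map Polynomial.C))
  have hterm : ∀ t : Finset (Fin n),
      (Matrix.of fun i j => if j ∈ t then (-(K.map Polynomial.C)) i j
        else (Matrix.diagonal fun _ : Fin n => (X : ℝ[X])) i j).det
      = Polynomial.C ((-1 : ℝ) ^ t.card *
          (K.submatrix (Subtype.val : {x // x ∈ t} → Fin n) Subtype.val).det)
        * X ^ (n - t.card) := by
    intro t
    rw [det_ite_diagonal]
    have h1 : ((-(K.map Polynomial.C)).submatrix
        (Subtype.val : {x // x ∈ t} → Fin n) Subtype.val).det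
        = (-1 : ℝ[X]) ^ t.card *
          Polynomial.C (K.submatrix (Subtype.val : {x // x ∈ t} → Fin n) Subtype.val).det := by
      have : ((-(K.map Polynomial.C)).submatrix
          (Subtype.val : {x // x ∈ t} → Fin n) (Subtype.val : {x // x ∈ t} → Fin n))
          = -((K.submatrix (Subtype.val : {x // x ∈ t} → Fin n)
              (Subtype.val : {x // x ∈ t} → Fin n)).map Polynomial.C) := by
        ext i j; simp
      rw [this, Matrix.det_neg, Fintype.card_coe]
      congr 1
      rw [(Polynomial.C : ℝ →+* ℝ[X]).map_det, RingHom.mapMatrix_apply]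
    rw [h1]
    rw [Polynomial.C_mul, Polynomial.C_pow, Polynomial.C_neg, Polynomial.C_1]
    ring
  rw [Matrix.charpoly, hsplit, hexp]
  rw [Polynomial.finset_sum_coeff]
  have hcoeff : ∀ t ∈ (Finset.univ : Finset (Fin n)).powerset,
      ((Matrix.of fun i j => if j ∈ t then (-(K.map Polynomial.C)) i j
        else (Matrix.diagonal fun _ : Fin n => (X : ℝ[X])) i j).det).coeff (n - k)
      = if t.card = k then
          (-1 : ℝ) ^ k *
            (K.submatrix (Subtype.val : {x // x ∈ t} → Fin n) Subtype.val).det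
        else 0 := by
    intro t ht
    rw [Finset.mem_powerset] at ht
    have htc : t.card ≤ n := by
      simpa using Finset.card_le_card ht
    rw [hterm t, Polynomial.coeff_C_mul, Polynomial.coeff_X_pow]
    have : n - k = n - t.card ↔ t.card = k := by omega
    by_cases h : t.card = k
    · simp [this.mpr h, h]
    · have : ¬ (n - k = n - t.card) := fun hc => h (this.mp hc)
      simp [this, h]
  rw [Finset.sum_congr rfl hcoeff, ← Finset.sum_filter, ← Finset.powersetCard_eq_filter,
    Finset.mul_sum]

lemma charpoly_rank_one_update {n : ℕ} (K : Matrix (Fin n) (Fin n) ℝ) (u w : Fin n → ℝ) :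
    Matrix.charpoly (K - vecMulVec w u)
      = Matrix.charpoly K +
        ∑ i, ∑ j, Polynomial.C (u i) * (Matrix.charmatrix K).adjugate i j *
          Polynomial.C (w j) := by
  classical
  set v : Fin n → ℝ[X] := fun i => Polynomial.C (w i) with hv
  set A := Matrix.charmatrix K with hA
  set B := (vecMulVec w u).map Polynomial.C with hB
  have hsplit : Matrix.charmatrix (K - vecMulVec w u) = A + B := by
    ext i j
    simp [hA, hB, Matrix.charmatrix_apply, Matrix.sub_apply, Polynomial.C_sub, vecMulVec_apply]
    ring
  set f : Finset (Fin n) → ℝ[X] :=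
    fun t => (Matrix.of fun i j => if j ∈ t then B i j else A i j).det with hf
  have hexp : Matrix.charpoly (K - vecMulVec w u) = ∑ t ∈ Finset.univ.powerset, f t := by
    rw [Matrix.charpoly, hsplit, det_add_expansion]
  -- pull a scalar column out
  have hcol : ∀ (t : Finset (Fin n)) (a : Fin n), a ∈ t →
      (Matrix.of fun i j => if j ∈ t then B i j else A i j)
        = Matrix.updateCol (Matrix.of fun i j => if j ∈ t then B i j else A i j) a
            (Polynomial.C (u a) • v) := by
    intro t a hat
    ext i j
    rcases eq_or_ne j a with hj | hj
    · subst hj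
      simp [Matrix.updateCol_apply, hat, hB, hv, vecMulVec_apply, Polynomial.C_mul, mul_comm]
    · simp [Matrix.updateCol_apply, hj]
  have hzero : ∀ t ∈ Finset.univ.powerset,
      t ∉ insert (∅ : Finset (Fin n)) (Finset.univ.powersetCard 1) → f t = 0 := by
    intro t _ hts
    have h2 : 1 < t.card := by
      rcases Nat.lt_or_ge t.card 2 with h | h
      · exfalso
        interval_cases h' : t.card
        · exact hts (by simp [Finset.card_eq_zero.mp h', Finset.mem_insert])
        · exact hts (by
            simp [Finset.mem_insert, Finset.mem_powersetCard, h'])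
      · omega
    obtain ⟨a, hat, b, hbt, hab⟩ := Finset.one_lt_card.mp h2
    set M := Matrix.of fun i j => if j ∈ t then B i j else A i j with hM
    have e1 : f t = Polynomial.C (u a) * (M.updateCol a v).det := by
      show (Matrix.of fun i j => if j ∈ t then B i j else A i j).det = _
      conv_lhs => rw [hcol t a hat]
      rw [Matrix.det_updateCol_smul]
    have e2 : (M.updateCol a v) = Matrix.updateCol (M.updateCol a v) b
        (Polynomial.C (u b) • v) := by
      ext i j
      rcases eq_or_ne j b with hj | hj
      · subst hj
        simp [Matrix.updateCol_apply, hab.symm, hM, hbt, hB, hv, vecMulVec_apply,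
          Polynomial.C_mul, mul_comm]
      · simp [Matrix.updateCol_apply, hj]
    have e3 : ((M.updateCol a v).updateCol b v).det = 0 := by
      apply Matrix.det_zero_of_column_eq hab
      intro i
      simp [Matrix.updateCol_apply, hab, hab.symm]
    rw [e1]
    conv_lhs => rw [e2]
    rw [Matrix.det_updateCol_smul, e3]
    ring
  have hsum : ∑ t ∈ Finset.univ.powerset, f t
      = ∑ t ∈ insert (∅ : Finset (Fin n)) (Finset.univ.powersetCard 1), f t := by
    refine (Finset.sum_subset ?_ hzero).symm
    intro t ht
    simp only [Finset.mem_insert, Finset.mem_powersetCard] at ht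
    simp [Finset.mem_powerset]
  have hempty : f ∅ = Matrix.charpoly K := by
    show (Matrix.of fun i j => if j ∈ (∅ : Finset (Fin n)) then B i j else A i j).det = _
    rw [Matrix.charpoly]
    congr 1
  have hsingle : ∀ c : Fin n, f {c}
      = ∑ j, Polynomial.C (u c) * (Matrix.charmatrix K).adjugate c j * Polynomial.C (w j) := by
    intro c
    have e1 : f {c} = Polynomial.C (u c) * ((A.updateCol c v).det) := by
      show (Matrix.of fun i j => if j ∈ ({c} : Finset (Fin n)) then B i j else A i j).det = _
      conv_lhs => rw [hcol {c} c (Finset.mem_singleton_self c)]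
      have : (Matrix.of fun i j => if j ∈ ({c} : Finset (Fin n)) then B i j else A i j).updateCol
          c (Polynomial.C (u c) • v) = A.updateCol c (Polynomial.C (u c) • v) := by
        ext i j
        rcases eq_or_ne j c with hj | hj
        · subst hj; simp [Matrix.updateCol_apply]
        · simp [Matrix.updateCol_apply, hj]
      rw [this, Matrix.det_updateCol_smul]
    rw [e1, ← Matrix.cramer_apply, Matrix.cramer_eq_adjugate_mulVec, Matrix.mulVec,
      dotProduct]
    rw [Finset.mul_sum]
    exact Finset.sum_congr rfl fun j _ => by rw [hA]; ring
  rw [hexp, hsum, Finset.sum_insert (by simp [Finset.mem_powersetCard]), hempty,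
    Finset.powersetCard_one, Finset.sum_map]
  simp only [Function.Embedding.coeFn_mk]
  rw [Finset.sum_congr rfl fun c _ => hsingle c]


/-- `e_k(K) − e_k(K − w uᵀ)` equals `((−1)^{k+1}/(n−k)!)` times the `(n−k)`-th
derivative of the polynomial `t ↦ uᵀ adj(tI − K) w` evaluated at `t = 0`.
Here `charmatrix K = t·I − K` as a matrix of polynomials in `t`. -/
theorem esymm_sub_rank_one_eq_deriv_adjugate (n : ℕ) (K : Matrix (Fin n) (Fin n) ℝ)
    (k : ℕ) (hk1 : 1 ≤ k) (hkn : k ≤ n) (u w : Fin n → ℝ) :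
    esymmMinors K k - esymmMinors (K - vecMulVec w u) k =
      ((-1 : ℝ) ^ (k + 1) / (n - k).factorial) *
        (Polynomial.derivative^[n - k]
          (∑ i, ∑ j, Polynomial.C (u i) * (Matrix.charmatrix K).adjugate i j *
            Polynomial.C (w j))).eval 0 := by
  classical
  set p := (∑ i, ∑ j, Polynomial.C (u i) * (Matrix.charmatrix K).adjugate i j *
    Polynomial.C (w j)) with hp
  have h4 := charpoly_rank_one_update K u w
  have hsubm : ∀ (A : Matrix (Fin n) (Fin n) ℝ), esymmMinors A k
      = ∑ C ∈ Finset.univ.powersetCard k,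
          (A.submatrix (Subtype.val : {x // x ∈ C} → Fin n) Subtype.val).det := fun A => rfl
  have hK := charpoly_coeff_esymm K hkn
  have hK' := charpoly_coeff_esymm (K - vecMulVec w u) hkn
  rw [← hsubm] at hK hK'
  have hdiff : (-1 : ℝ) ^ k * (esymmMinors K k - esymmMinors (K - vecMulVec w u) k)
      = - p.coeff (n - k) := by
    rw [mul_sub, ← hK, ← hK', h4]
    simp [Polynomial.coeff_add, hp]
  have heval : (Polynomial.derivative^[n - k] p).eval 0
      = ((n - k).factorial : ℝ) * p.coeff (n - k) := by
    rw [← Polynomial.coeff_zero_eq_eval_zero, Polynomial.coeff_iterate_derivative]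
    simp [Nat.descFactorial_self, nsmul_eq_mul]
  have hfac : (((n - k).factorial : ℝ)) ≠ 0 := Nat.cast_ne_zero.mpr (n - k).factorial_ne_zero
  have h1 : ((-1 : ℝ) ^ k) * ((-1 : ℝ) ^ k) = 1 := by
    rw [← mul_pow]; norm_num
  have hkey : esymmMinors K k - esymmMinors (K - vecMulVec w u) k
      = (-1 : ℝ) ^ (k + 1) * p.coeff (n - k) := by
    calc esymmMinors K k - esymmMinors (K - vecMulVec w u) k
        = ((-1 : ℝ) ^ k * (-1 : ℝ) ^ k) *
            (esymmMinors K k - esymmMinors (K - vecMulVec w u) k) := by rw [h1, one_mul]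
      _ = (-1 : ℝ) ^ k * (- p.coeff (n - k)) := by rw [mul_assoc, hdiff]
      _ = (-1 : ℝ) ^ (k + 1) * p.coeff (n - k) := by rw [pow_succ]; ring
  rw [hkey, heval]
  field_simp
end

section
/- Let A be an n×n real matrix, and let 1 ≤ k ≤ n. Then the sum of all k×k principal minors of A satisfies e_k(A) = ((−1)^k/(n−k)!) · (d/dt)^{n−k} [det(tI − A)] evaluated at t = 0, where det(tI − A) is regarded as a polynomial in t and the derivative is the (n−k)-th polynomial derivative. -/
open Matrix BigOperators Finset Polynomial

def eCompl {n : ℕ} (s : Finset (Fin n)) : {x : Fin n // x ∈ sᶜ} ≃ {i : Fin n // ¬ i ∈ s} :=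
  Equiv.subtypeEquivRight (fun x => (Finset.mem_compl (s := s) (a := x)))

@[simp] lemma eCompl_coe {n : ℕ} (s : Finset (Fin n)) (x : {x : Fin n // x ∈ sᶜ}) :
    ((eCompl s x : {i : Fin n // ¬ i ∈ s}) : Fin n) = (x : Fin n) := rfl

lemma det_inst_irrel (m : Type) [DecidableEq m] (F1 F2 : Fintype m) (M : Matrix m m ℝ[X]) :
    @Matrix.det m _ F1 ℝ[X] _ M = @Matrix.det m _ F2 ℝ[X] _ M := by
  rw [Subsingleton.elim F1 F2]

lemma det_piece {n : ℕ} (A : Matrix (Fin n) (Fin n) ℝ) (s : Finset (Fin n)) :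
    (Matrix.of (s.piecewise (fun i => (Matrix.diagonal fun _ : Fin n => (X : ℝ[X])) i)
      (fun i => (-(A.map C)) i))).det
    = (-1 : ℝ[X]) ^ (n - s.card) * (X ^ s.card * C ((principalSub A sᶜ).det)) := by
  set M := Matrix.of (s.piecewise (fun i => (Matrix.diagonal fun _ : Fin n => (X : ℝ[X])) i)
      (fun i => (-(A.map C)) i)) with hM
  have h0 : ∀ i, i ∈ s → ∀ j, j ∉ s → M i j = 0 := by
    intro i hi j hj
    have : i ≠ j := fun h => hj (h ▸ hi)
    simp [hM, Finset.piecewise_eq_of_mem _ _ _ hi, Matrix.diagonal_apply_ne _ this]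
  rw [Matrix.twoBlockTriangular_det' M (· ∈ s) h0,
    det_inst_irrel {i : Fin n // (fun x => x ∈ s) i} _ inferInstance,
    det_inst_irrel {i : Fin n // ¬ (fun x => x ∈ s) i} _ inferInstance]
  have h1 : (M.toSquareBlockProp (· ∈ s)).det = X ^ s.card := by
    rw [← Matrix.det_submatrix_equiv_self s.equivFin.symm (M.toSquareBlockProp (· ∈ s))]
    have heq : ((M.toSquareBlockProp (· ∈ s)).submatrix s.equivFin.symm s.equivFin.symm)
        = Matrix.diagonal (fun _ : Fin s.card => (X : ℝ[X])) := by
      ext i j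
      rcases eq_or_ne i j with h | h
      · subst h
        simp [Matrix.toSquareBlockProp, hM,
          Finset.piecewise_eq_of_mem _ _ _ (s.equivFin.symm i).2]
      · have h2 : ((s.equivFin.symm i : {x // x ∈ s}) : Fin n)
            ≠ ((s.equivFin.symm j : {x // x ∈ s}) : Fin n) := by
          simp only [ne_eq, ← Subtype.ext_iff, EmbeddingLike.apply_eq_iff_eq]
          exact h
        simp [Matrix.toSquareBlockProp, hM,
          Finset.piecewise_eq_of_mem _ _ _ (s.equivFin.symm i).2,
          Matrix.diagonal_apply_ne _ h, Matrix.diagonal_apply_ne _ h2]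
    rw [heq, Matrix.det_diagonal, Finset.prod_const, Finset.card_univ, Fintype.card_fin]
  have h2 : (M.toSquareBlockProp (fun i => ¬ i ∈ s)).det
      = (-1 : ℝ[X]) ^ (n - s.card) * C ((principalSub A sᶜ).det) := by
    rw [← Matrix.det_submatrix_equiv_self (eCompl s) (M.toSquareBlockProp (fun i => ¬ i ∈ s))]
    have he : ((M.toSquareBlockProp (fun i => ¬ i ∈ s)).submatrix (eCompl s) (eCompl s))
        = -((principalSub A sᶜ).map C) := by
      ext i j
      have hi : (i : Fin n) ∉ s := Finset.mem_compl.mp i.2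
      simp [Matrix.toSquareBlockProp, hM, Finset.piecewise_eq_of_notMem _ _ _ hi, principalSub]
    rw [he, Matrix.det_neg, ← RingHom.mapMatrix_apply, RingHom.map_det]
    have hc : Fintype.card {x : Fin n // x ∈ sᶜ} = n - s.card := by
      rw [Fintype.card_coe, Finset.card_compl, Fintype.card_fin]
    rw [hc]
  rw [h1, h2]
  ring

lemma charpoly_expand {n : ℕ} (A : Matrix (Fin n) (Fin n) ℝ) :
    A.charpoly = ∑ s : Finset (Fin n),
      (Polynomial.monomial s.card ((-1 : ℝ) ^ (n - s.card) * (principalSub A sᶜ).det)) := by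
  have hmat : charmatrix A = Matrix.of ((fun i => (Matrix.diagonal fun _ : Fin n => (X : ℝ[X])) i)
      + (fun i => (-(A.map C)) i)) := by
    ext i j
    simp [charmatrix_apply, sub_eq_add_neg]
  rw [Matrix.charpoly, hmat]
  have expand : (Matrix.of ((fun i => (Matrix.diagonal fun _ : Fin n => (X : ℝ[X])) i)
      + (fun i => (-(A.map C)) i))).det
      = ∑ s : Finset (Fin n),
        (Matrix.of (s.piecewise (fun i => (Matrix.diagonal fun _ : Fin n => (X : ℝ[X])) i)
          (fun i => (-(A.map C)) i))).det :=
    (Matrix.detRowAlternating.toMultilinearMap).map_add_univ _ _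
  rw [expand]
  refine Finset.sum_congr rfl fun s _ => ?_
  rw [det_piece A s, ← Polynomial.C_mul_X_pow_eq_monomial]
  simp only [_root_.map_mul, map_pow, map_neg, Polynomial.C_1]
  ring

/-- The sum of all `k × k` principal minors of `A` satisfies
`e_k(A) = ((−1)^k/(n−k)!) · (d/dt)^{n−k} [det(tI − A)]` at `t = 0`, where
`det(tI − A)` is the characteristic polynomial `A.charpoly = det(X·I − A)`. -/
theorem esymmMinors_eq_deriv_charpoly (n : ℕ) (A : Matrix (Fin n) (Fin n) ℝ)
    (k : ℕ) (hk1 : 1 ≤ k) (hkn : k ≤ n) :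
    esymmMinors A k =
      ((-1 : ℝ) ^ k / (n - k).factorial) *
        (Polynomial.derivative^[n - k] A.charpoly).eval 0 := by
  have hev : (Polynomial.derivative^[n - k] A.charpoly).eval 0
      = ((n - k).factorial : ℝ) * A.charpoly.coeff (n - k) := by
    rw [← Polynomial.coeff_zero_eq_eval_zero, Polynomial.coeff_iterate_derivative]
    simp [Nat.descFactorial_self, nsmul_eq_mul]
  have hco : A.charpoly.coeff (n - k) = (-1 : ℝ) ^ k * esymmMinors A k := by
    rw [charpoly_expand A, Polynomial.finset_sum_coeff]
    simp only [Polynomial.coeff_monomial]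
    rw [← Finset.sum_filter]
    have hfil : (Finset.univ : Finset (Finset (Fin n))).filter (fun x => x.card = n - k)
        = Finset.powersetCard (n - k) Finset.univ := by
      rw [Finset.powersetCard_eq_filter, Finset.powerset_univ]
    rw [hfil, esymmMinors, Finset.mul_sum]
    refine Finset.sum_bij' (fun s _ => sᶜ) (fun C _ => Cᶜ) ?_ ?_ ?_ ?_ ?_
    · intro s hs
      rw [Finset.mem_powersetCard_univ] at hs ⊢
      rw [Finset.card_compl, hs, Fintype.card_fin]
      exact Nat.sub_sub_self hkn
    · intro C hC
      rw [Finset.mem_powersetCard_univ] at hC ⊢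
      rw [Finset.card_compl, hC, Fintype.card_fin]
    · intro s _; exact compl_compl s
    · intro C _; exact compl_compl C
    · intro s hs
      rw [Finset.mem_powersetCard_univ] at hs
      rw [hs, Nat.sub_sub_self hkn]
  rw [hev, hco]
  have h0 : ((n - k).factorial : ℝ) ≠ 0 := Nat.cast_ne_zero.mpr (Nat.factorial_ne_zero _)
  have h1 : ((-1 : ℝ)) ^ k * (-1 : ℝ) ^ k = 1 := by
    rw [← pow_add, ← two_mul]
    exact Even.neg_one_pow ⟨k, (two_mul k)⟩
  field_simp
  linear_combination (-esymmMinors A k) * h1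
end
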